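/- With A as above and A[kβ] obtained from A by replacing the (kβ)-th column by the vector h = (min(j,l))_{jα} (for a fixed l ≥ 1), one has det A[kβ] = (det F[k]) · ∏_{j∈H}(p_j+m_j)^{m_j-1}, where F[k] is F with its k-th column replaced by h' = (min(j,l))_{j∈H}. Consequently det A[jα]/det A = det F[j]/det F whenever det A ≠ 0. -/

import Mathlib

open Matrix Finset

set_option maxHeartbeats 1000000

lemma keydet {s : ℕ} {m : Fin s → ℕ} (r : ∀ a : Fin s, Fin (m a))
    (d : ((a : Fin s) × Fin (m a)) → ℤ)
    (M : Matrix ((a : Fin s) × Fin (m a)) ((a : Fin s) × Fin (m a)) ℤ)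
    (G : Matrix (Fin s) (Fin s) ℤ)
    (h1 : ∀ x z : (a : Fin s) × Fin (m a), x.2 ≠ r x.1 → M x z = if z = x then d x else 0)
    (h2 : ∀ a b : Fin s, M ⟨a, r a⟩ ⟨b, r b⟩ = G a b) :
    M.det = G.det *
      ∏ x ∈ Finset.univ.filter (fun x : (a : Fin s) × Fin (m a) => x.2 ≠ r x.1), d x := by
  classical
  set P : ((a : Fin s) × Fin (m a)) → Prop := fun x => x.2 = r x.1 with hP
  let e : {x // P x} ⊕ {x // ¬ P x} ≃ ((a : Fin s) × Fin (m a)) := Equiv.sumCompl P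
  let f : Fin s ≃ {x // P x} :=
    { toFun := fun a => ⟨⟨a, r a⟩, rfl⟩
      invFun := fun x => x.1.1
      left_inv := fun a => rfl
      right_inv := by
        rintro ⟨⟨a, β⟩, h⟩
        simp only [hP] at h
        subst h
        rfl }
  have hdet := Matrix.det_submatrix_equiv_self e M
  have hM : M.submatrix e e =
      Matrix.fromBlocks (G.submatrix f.symm f.symm)
        (Matrix.of fun (x : {x // P x}) (z : {x // ¬ P x}) => M x.1 z.1)
        0 (Matrix.diagonal (fun x : {x // ¬ P x} => d x.1)) := by
    ext x z
    cases x with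
    | inl x =>
      cases z with
      | inl z =>
        obtain ⟨⟨a, β⟩, hx⟩ := x
        obtain ⟨⟨b, γ⟩, hz⟩ := z
        simp only [hP] at hx hz
        subst hx; subst hz
        simpa [e, f] using h2 a b
      | inr z => simp [e]
    | inr x =>
      cases z with
      | inl z =>
        have : (z : (a : Fin s) × Fin (m a)) ≠ (x : (a : Fin s) × Fin (m a)) := by
          intro h
          exact x.2 (h ▸ z.2)
        simp [e, h1 x.1 z.1 x.2, this]
      | inr z =>
        have := h1 x.1 z.1 x.2
        simp only [e, Matrix.submatrix_apply, Equiv.sumCompl_apply_inr,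
          Matrix.fromBlocks_apply₂₂, Matrix.diagonal_apply]
        rw [this]
        by_cases h : x = z
        · subst h; simp
        · rw [if_neg (fun hc => h (Subtype.ext hc.symm)), if_neg (fun hc => h hc)]
  rw [← hdet, hM, Matrix.det_fromBlocks_zero₂₁, Matrix.det_submatrix_equiv_self,
    Matrix.det_diagonal]
  congr 1
  exact (Finset.prod_subtype _ (by simp [hP]) d).symm

lemma det_uni {s : ℕ} {m : Fin s → ℕ} (r : ∀ a : Fin s, Fin (m a))
    (c : ((a : Fin s) × Fin (m a)) → ℤ)
    (E : Matrix ((a : Fin s) × Fin (m a)) ((a : Fin s) × Fin (m a)) ℤ)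
    (hE : ∀ x u : (a : Fin s) × Fin (m a), E x u =
      (if u = x then 1 else 0) +
        (if x.2 ≠ r x.1 ∧ u = (⟨x.1, r x.1⟩ : (a : Fin s) × Fin (m a)) then c x else 0)) :
    E.det = 1 := by
  classical
  rw [← Matrix.det_transpose]
  rw [keydet r (fun _ => 1) E.transpose 1 ?h1 ?h2]
  · simp
  case h1 =>
    intro x z hx
    rw [Matrix.transpose_apply, hE]
    have : ¬ (z.2 ≠ r z.1 ∧ x = (⟨z.1, r z.1⟩ : (a : Fin s) × Fin (m a))) := by
      rintro ⟨h1, h2⟩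
      subst h2
      exact hx rfl
    rw [if_neg this]
    by_cases h : z = x
    · subst h; simp
    · rw [if_neg (fun hc => h hc.symm), if_neg h]
      ring
  case h2 =>
    intro a b
    rw [Matrix.transpose_apply, hE]
    simp only [ne_eq, not_true_eq_false, false_and, if_false, add_zero]
    by_cases h : a = b
    · subst h; simp [Matrix.one_apply]
    · simp [Matrix.one_apply, Sigma.mk.inj_iff, h, Ne.symm h]

lemma core {s : ℕ} {m : Fin s → ℕ} (p : Fin s → ℤ) (r : ∀ a : Fin s, Fin (m a))
    (exc : Fin s → Prop) [DecidablePred exc]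
    (B : Matrix ((a : Fin s) × Fin (m a)) ((a : Fin s) × Fin (m a)) ℤ)
    (G : Matrix (Fin s) (Fin s) ℤ)
    (h1 : ∀ x z : (a : Fin s) × Fin (m a), x.2 ≠ r x.1 →
      B x z = B ⟨x.1, r x.1⟩ z + (p x.1 + (m x.1 : ℤ)) *
        ((if z = x then 1 else 0) -
         (if z = (⟨x.1, r x.1⟩ : (a : Fin s) × Fin (m a)) ∧ ¬ exc x.1 then 1 else 0)))
    (h2 : ∀ a b, ¬ exc b → (∑ β : Fin (m b), B ⟨a, r a⟩ ⟨b, β⟩) = G a b)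
    (h3 : ∀ a b, exc b → B ⟨a, r a⟩ ⟨b, r b⟩ = G a b) :
    B.det = G.det * ∏ a, (p a + (m a : ℤ)) ^ (m a - 1) := by
  classical
  set E : Matrix ((a : Fin s) × Fin (m a)) ((a : Fin s) × Fin (m a)) ℤ := Matrix.of fun x u =>
    (if u = x then 1 else 0) +
      (if x.2 ≠ r x.1 ∧ u = (⟨x.1, r x.1⟩ : (a : Fin s) × Fin (m a)) then (-1 : ℤ) else 0) with hEdef
  set C : Matrix ((a : Fin s) × Fin (m a)) ((a : Fin s) × Fin (m a)) ℤ := Matrix.of fun v z =>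
    (if z = v then 1 else 0) +
      (if v.2 ≠ r v.1 ∧ z = (⟨v.1, r v.1⟩ : (a : Fin s) × Fin (m a)) then
        (if exc v.1 then 0 else (1 : ℤ)) else 0) with hCdef
  have hdetE : E.det = 1 := det_uni r _ E (fun x u => rfl)
  have hdetC : C.det = 1 := det_uni r _ C (fun x u => rfl)
  -- entries of E * B
  have hEB : ∀ x v, (E * B) x v =
      B x v + (if x.2 ≠ r x.1 then -(B ⟨x.1, r x.1⟩ v) else 0) := by
    intro x v
    rw [Matrix.mul_apply]
    by_cases hx : x.2 ≠ r x.1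
    · simp [hEdef, hx, add_mul, ite_mul, Finset.sum_add_distrib,
        Finset.sum_ite_eq' Finset.univ]
    · simp [hEdef, hx, add_mul, ite_mul, Finset.sum_add_distrib,
        Finset.sum_ite_eq' Finset.univ]
  set N := E * B with hNdef
  -- rows of N outside R
  have hN1 : ∀ x v : (a : Fin s) × Fin (m a), x.2 ≠ r x.1 → N x v = (p x.1 + (m x.1 : ℤ)) *
      ((if v = x then 1 else 0) -
       (if v = (⟨x.1, r x.1⟩ : (a : Fin s) × Fin (m a)) ∧ ¬ exc x.1 then 1 else 0)) := by
    intro x v hx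
    rw [hEB x v, if_pos hx, h1 x v hx]
    ring
  have hN2 : ∀ (a : Fin s) (v : (a : Fin s) × Fin (m a)), N ⟨a, r a⟩ v = B ⟨a, r a⟩ v := by
    intro a v
    rw [hEB]
    simp
  -- entries of N * C
  have hNC : ∀ x z, (N * C) x z = N x z +
      ∑ v : (a : Fin s) × Fin (m a), (if v.2 ≠ r v.1 ∧ z = (⟨v.1, r v.1⟩ : (a : Fin s) × Fin (m a)) ∧ ¬ exc v.1 then N x v else 0) := by
    intro x z
    rw [Matrix.mul_apply]
    have key : ∀ v : (a : Fin s) × Fin (m a), N x v * C v z =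
        (if v = z then N x v else 0) +
        (if v.2 ≠ r v.1 ∧ z = (⟨v.1, r v.1⟩ : (a : Fin s) × Fin (m a)) ∧ ¬ exc v.1 then N x v else 0) := by
      intro v
      rw [hCdef]
      simp only [Matrix.of_apply]
      rw [mul_add]
      congr 1
      · rw [mul_ite, mul_one, mul_zero]
        by_cases h : v = z
        · rw [if_pos h, if_pos h.symm]
        · rw [if_neg (fun hh => h hh.symm), if_neg h]
      · rw [mul_ite, mul_zero]
        by_cases hv : v.2 ≠ r v.1 ∧ z = (⟨v.1, r v.1⟩ : (a : Fin s) × Fin (m a))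
        · rw [if_pos hv, mul_ite, mul_zero, mul_one]
          by_cases he : exc v.1
          · rw [if_pos he, if_neg (fun hh => hh.2.2 he)]
          · rw [if_neg he, if_pos ⟨hv.1, hv.2, he⟩]
        · rw [if_neg hv, if_neg (fun hh => hv ⟨hh.1, hh.2.1⟩)]
    rw [Finset.sum_congr rfl (fun v _ => key v), Finset.sum_add_distrib,
      Finset.sum_ite_eq' Finset.univ z (fun v => N x v)]
    simp
  -- hypothesis 1 for keydet
  have hM1 : ∀ x z : (a : Fin s) × Fin (m a), x.2 ≠ r x.1 →
      (N * C) x z = if z = x then (p x.1 + (m x.1 : ℤ)) else 0 := by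
    intro x z hx
    rw [hNC x z, hN1 x z hx]
    have step : ∀ v : (a : Fin s) × Fin (m a), (if v.2 ≠ r v.1 ∧ z = (⟨v.1, r v.1⟩ : (a : Fin s) × Fin (m a)) ∧ ¬ exc v.1
        then N x v else 0) =
        if v = x then (if z = (⟨x.1, r x.1⟩ : (a : Fin s) × Fin (m a)) ∧ ¬ exc x.1
          then (p x.1 + (m x.1 : ℤ)) else 0) else 0 := by
      intro v
      by_cases hv : v = x
      · subst hv
        by_cases hc : z = (⟨v.1, r v.1⟩ : (a : Fin s) × Fin (m a)) ∧ ¬ exc v.1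
        · rw [if_pos ⟨hx, hc.1, hc.2⟩, if_pos rfl, if_pos hc, hN1 v v hx]
          have h2' : ¬ (v = (⟨v.1, r v.1⟩ : (a : Fin s) × Fin (m a)) ∧ ¬ exc v.1) := by
            rintro ⟨hc2, -⟩
            exact hx (by rw [hc2])
          rw [if_pos rfl, if_neg h2']
          ring
        · rw [if_neg (fun h => hc ⟨h.2.1, h.2.2⟩), if_pos rfl, if_neg hc]
      · by_cases hc : v.2 ≠ r v.1 ∧ z = (⟨v.1, r v.1⟩ : (a : Fin s) × Fin (m a)) ∧ ¬ exc v.1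
        · rw [if_pos hc, if_neg hv, hN1 x v hx, if_neg hv,
            if_neg (fun hh : v = (⟨x.1, r x.1⟩ : (a : Fin s) × Fin (m a)) ∧ ¬ exc x.1 => hc.1 (by rw [hh.1]))]
          ring
        · rw [if_neg hc, if_neg hv]
    rw [Finset.sum_congr rfl (fun v _ => step v), Finset.sum_ite_eq' Finset.univ x, if_pos (Finset.mem_univ x)]
    by_cases h : z = x
    · have h2' : ¬ (z = (⟨x.1, r x.1⟩ : (a : Fin s) × Fin (m a)) ∧ ¬ exc x.1) := by
        rintro ⟨hc2, -⟩
        exact hx (by rw [h.symm.trans hc2])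
      rw [if_pos h, if_pos h, if_neg h2', if_neg h2']
      ring
    · rw [if_neg h, if_neg h]
      by_cases hc : z = (⟨x.1, r x.1⟩ : (a : Fin s) × Fin (m a)) ∧ ¬ exc x.1
      · rw [if_pos hc, if_pos hc]; ring
      · rw [if_neg hc, if_neg hc]; ring
  -- hypothesis 2 for keydet
  have hM2 : ∀ a b : Fin s, (N * C) (⟨a, r a⟩ : (a : Fin s) × Fin (m a)) (⟨b, r b⟩ : (a : Fin s) × Fin (m a)) = G a b := by
    intro a b
    rw [hNC]
    simp only [hN2]
    by_cases hb : exc b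
    · have step0 : ∀ v : (a : Fin s) × Fin (m a),
          (if v.2 ≠ r v.1 ∧ (⟨b, r b⟩ : (a : Fin s) × Fin (m a)) = (⟨v.1, r v.1⟩ : (a : Fin s) × Fin (m a)) ∧ ¬ exc v.1
            then B (⟨a, r a⟩ : (a : Fin s) × Fin (m a)) v else 0) = 0 := by
        intro v
        rw [if_neg]
        rintro ⟨-, hv1, hv2⟩
        exact hv2 ((Sigma.mk.inj_iff.mp hv1).1 ▸ hb)
      rw [Finset.sum_congr rfl (fun v _ => step0 v), Finset.sum_const_zero, add_zero]
      exact h3 a b hb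
    · have step : ∀ v : (a : Fin s) × Fin (m a),
          (if v.2 ≠ r v.1 ∧ (⟨b, r b⟩ : (a : Fin s) × Fin (m a)) = (⟨v.1, r v.1⟩ : (a : Fin s) × Fin (m a)) ∧ ¬ exc v.1
            then B (⟨a, r a⟩ : (a : Fin s) × Fin (m a)) v else 0) =
          (if v.1 = b then B (⟨a, r a⟩ : (a : Fin s) × Fin (m a)) v else 0)
            - (if v = (⟨b, r b⟩ : (a : Fin s) × Fin (m a)) then B (⟨a, r a⟩ : (a : Fin s) × Fin (m a)) v else 0) := by
        intro v
        by_cases hv1 : v.1 = b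
        · subst hv1
          by_cases hv2 : v = (⟨v.1, r v.1⟩ : (a : Fin s) × Fin (m a))
          · rw [if_neg, if_pos rfl, if_pos hv2, sub_self]
            rintro ⟨hne, -, -⟩
            exact hne (by rw [hv2])
          · have hne : v.2 ≠ r v.1 := fun hh => hv2 (Sigma.ext rfl (heq_of_eq hh))
            rw [if_pos ⟨hne, rfl, hb⟩, if_pos rfl, if_neg hv2, sub_zero]
        · rw [if_neg, if_neg hv1, if_neg, sub_zero]
          · intro hh
            exact hv1 (by rw [hh])
          · rintro ⟨-, hv2, -⟩
            exact hv1 ((Sigma.mk.inj_iff.mp hv2).1).symm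
      have hsig : (∑ v : (a : Fin s) × Fin (m a),
          (if v.1 = b then B (⟨a, r a⟩ : (a : Fin s) × Fin (m a)) v else 0))
          = ∑ β : Fin (m b), B (⟨a, r a⟩ : (a : Fin s) × Fin (m a)) ⟨b, β⟩ := by
        rw [← Finset.univ_sigma_univ, Finset.sum_sigma]
        have inner : ∀ c : Fin s, (∑ β : Fin (m c),
            (if c = b then B (⟨a, r a⟩ : (a : Fin s) × Fin (m a)) ⟨c, β⟩ else 0))
            = if c = b then (∑ β : Fin (m c), B (⟨a, r a⟩ : (a : Fin s) × Fin (m a)) ⟨c, β⟩) else 0 := by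
          intro c
          by_cases hc : c = b
          · simp [hc]
          · simp [hc]
        rw [Finset.sum_congr rfl (fun c _ => inner c)]
        have := Finset.sum_ite_eq' Finset.univ b
          (fun c => ∑ β : Fin (m c), B (⟨a, r a⟩ : (a : Fin s) × Fin (m a)) ⟨c, β⟩)
        rw [this, if_pos (Finset.mem_univ b)]
      rw [Finset.sum_congr rfl (fun v _ => step v), Finset.sum_sub_distrib,
        Finset.sum_ite_eq' Finset.univ (⟨b, r b⟩ : (a : Fin s) × Fin (m a))
          (fun v => B (⟨a, r a⟩ : (a : Fin s) × Fin (m a)) v),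
        if_pos (Finset.mem_univ _), hsig, ← h2 a b hb]
      ring
  -- assemble
  have hkey := keydet r (fun x : (a : Fin s) × Fin (m a) => p x.1 + (m x.1 : ℤ)) (N * C) G hM1 hM2
  have hdetB : (N * C).det = B.det := by
    rw [Matrix.det_mul, hNdef, Matrix.det_mul, hdetE, hdetC, one_mul, mul_one]
  rw [← hdetB, hkey]
  congr 1
  have hset : Finset.univ.filter (fun x : (a : Fin s) × Fin (m a) => x.2 ≠ r x.1)
      = Finset.univ.sigma (fun a => Finset.univ.filter (fun β => β ≠ r a)) := by
    ext ⟨a, β⟩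
    simp
  rw [hset, Finset.prod_sigma]
  refine Finset.prod_congr rfl (fun a _ => ?_)
  simp [Finset.filter_ne', Finset.prod_const, Finset.card_univ]

/-- `det A[kβ] = (det F[k]) ∏_{j∈H}(p_j+m_j)^{m_j-1}`, where `A[kβ]` is `A`
with its `(k,β)`-th column replaced by `h = (min(j,l))_{jα}` and `F[k]` is `F`
with its `k`-th column replaced by `h' = (min(j,l))_{j∈H}`; consequently
`det A[jα] / det A = det F[j] / det F` whenever `det A ≠ 0`. -/
theorem stmt11 (s : ℕ)
    (j : Fin s → ℕ) (hj : StrictMono j) (hjpos : ∀ a, 0 < j a)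
    (m : Fin s → ℕ) (hm : ∀ a, 0 < m a)
    (p : Fin s → ℤ) (l : ℕ) (hl : 1 ≤ l)
    (A : Matrix ((a : Fin s) × Fin (m a)) ((a : Fin s) × Fin (m a)) ℤ)
    (hA : ∀ x y, A x y =
      (if x = y then p x.1 + (m x.1 : ℤ) else 0) + 2 * (min (j x.1) (j y.1) : ℤ)
        - (if x.1 = y.1 then 1 else 0))
    (F : Matrix (Fin s) (Fin s) ℤ)
    (hF : ∀ a b, F a b =
      (if a = b then p a else 0) + 2 * (min (j a) (j b) : ℤ) * (m b : ℤ)) :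
    (∀ y : (a : Fin s) × Fin (m a),
      (A.updateCol y (fun x => (min (j x.1) l : ℤ))).det =
        (F.updateCol y.1 (fun a => (min (j a) l : ℤ))).det *
          ∏ a, (p a + (m a : ℤ)) ^ (m a - 1)) ∧
    (A.det ≠ 0 → ∀ y : (a : Fin s) × Fin (m a),
      ((A.updateCol y (fun x => (min (j x.1) l : ℤ))).det : ℚ) / (A.det : ℚ) =
        ((F.updateCol y.1 (fun a => (min (j a) l : ℤ))).det : ℚ) / (F.det : ℚ)) := by
  classical
  -- generic row-difference identity for A
  have hAdiff : ∀ (rr : ∀ a : Fin s, Fin (m a)) (x z : (a : Fin s) × Fin (m a)),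
      A x z = A ⟨x.1, rr x.1⟩ z + (p x.1 + (m x.1 : ℤ)) *
        ((if z = x then 1 else 0) -
         (if z = (⟨x.1, rr x.1⟩ : (a : Fin s) × Fin (m a)) then 1 else 0)) := by
    intro rr x z
    rw [hA x z, hA ⟨x.1, rr x.1⟩ z]
    dsimp only
    by_cases h1 : x = z
    · have h1' : z = x := h1.symm
      by_cases h2 : z = (⟨x.1, rr x.1⟩ : (a : Fin s) × Fin (m a))
      · rw [if_pos h1, if_pos h2.symm, if_pos h1', if_pos h2]
        ring
      · rw [if_pos h1,
          if_neg (show ¬ (⟨x.1, rr x.1⟩ : (a : Fin s) × Fin (m a)) = z from fun hh => h2 hh.symm),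
          if_pos h1', if_neg h2]
        ring
    · have h1' : ¬ z = x := fun hh => h1 hh.symm
      by_cases h2 : z = (⟨x.1, rr x.1⟩ : (a : Fin s) × Fin (m a))
      · rw [if_neg h1, if_pos h2.symm, if_neg h1', if_pos h2]
        ring
      · rw [if_neg h1,
          if_neg (show ¬ (⟨x.1, rr x.1⟩ : (a : Fin s) × Fin (m a)) = z from fun hh => h2 hh.symm),
          if_neg h1', if_neg h2]
        ring
  -- row sums of A equal F
  have hsumA : ∀ (rr : ∀ a : Fin s, Fin (m a)) (a b : Fin s),
      (∑ β : Fin (m b), A ⟨a, rr a⟩ ⟨b, β⟩) = F a b := by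
    intro rr a b
    by_cases hab : a = b
    · subst hab
      have key : ∀ β : Fin (m a), A ⟨a, rr a⟩ ⟨a, β⟩ =
          (if β = rr a then p a + (m a : ℤ) else 0) +
            (2 * (min (j a) (j a) : ℤ) - 1) := by
        intro β
        rw [hA]
        by_cases hb : β = rr a
        · subst hb
          rw [if_pos rfl, if_pos rfl]
          dsimp only
          simp only [if_true]
          ring
        · rw [if_neg (show ¬ (⟨a, rr a⟩ : (a : Fin s) × Fin (m a)) = ⟨a, β⟩ from
              fun hh => hb (eq_of_heq (Sigma.mk.inj_iff.mp hh).2).symm), if_neg hb]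
          dsimp only
          simp only [if_true]
          ring
      rw [Finset.sum_congr rfl (fun β _ => key β), Finset.sum_add_distrib,
        Finset.sum_ite_eq' Finset.univ (rr a), if_pos (Finset.mem_univ _),
        Finset.sum_const, Finset.card_univ, Fintype.card_fin, hF, if_pos rfl,
        nsmul_eq_mul]
      ring
    · have key : ∀ β : Fin (m b), A ⟨a, rr a⟩ ⟨b, β⟩ = 2 * (min (j a) (j b) : ℤ) := by
        intro β
        rw [hA, if_neg (show ¬ (⟨a, rr a⟩ : (a : Fin s) × Fin (m a)) = ⟨b, β⟩ from
            fun hh => hab (Sigma.mk.inj_iff.mp hh).1), if_neg hab]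
        dsimp only
        ring
      rw [Finset.sum_congr rfl (fun β _ => key β), Finset.sum_const, Finset.card_univ,
        Fintype.card_fin, hF, if_neg hab, nsmul_eq_mul]
      ring
  -- determinant of A itself
  have hdetA : A.det = F.det * ∏ a, (p a + (m a : ℤ)) ^ (m a - 1) := by
    refine core p (fun a => ⟨0, hm a⟩) (fun _ => False) A F ?_ ?_ ?_
    · intro x z hx
      have := hAdiff (fun a => ⟨0, hm a⟩) x z
      simpa using this
    · intro a b _
      exact hsumA (fun a => ⟨0, hm a⟩) a b
    · intro a b hb
      exact absurd hb (by simp)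
  -- part 1
  have part1 : ∀ y : (a : Fin s) × Fin (m a),
      (A.updateCol y (fun x => (min (j x.1) l : ℤ))).det =
        (F.updateCol y.1 (fun a => (min (j a) l : ℤ))).det *
          ∏ a, (p a + (m a : ℤ)) ^ (m a - 1) := by
    intro y
    set g : Fin s → ℤ := fun a => (min (j a) l : ℤ) with hgdef
    set r : ∀ a : Fin s, Fin (m a) := fun a =>
      if h : a = y.1 then (Fin.cast (by rw [h]) y.2) else ⟨0, hm a⟩ with hrdef
    have hry : (⟨y.1, r y.1⟩ : (a : Fin s) × Fin (m a)) = y := by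
      refine Sigma.ext rfl (heq_of_eq ?_)
      rw [hrdef]
      simp only [dif_pos]
      exact Fin.ext rfl
    refine core p r (fun b => b = y.1) (A.updateCol y (fun x => (min (j x.1) l : ℤ)))
      (F.updateCol y.1 (fun a => (min (j a) l : ℤ))) ?_ ?_ ?_
    · intro x z hx
      have hxy : x ≠ y := by
        intro hh
        subst hh
        exact hx (by rw [← hry])
      by_cases hz : z = y
      · rw [Matrix.updateCol_apply, if_pos hz, Matrix.updateCol_apply, if_pos hz]
        have e1 : ¬ z = x := fun hh => hxy (hh.symm.trans hz)
        have e2 : ¬ (z = (⟨x.1, r x.1⟩ : (a : Fin s) × Fin (m a)) ∧ ¬ x.1 = y.1) := by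
          rintro ⟨hc, hnk⟩
          exact hnk (by rw [← hz, hc])
        rw [if_neg e1, if_neg e2]
        dsimp only
        ring
      · rw [Matrix.updateCol_apply, if_neg hz, Matrix.updateCol_apply, if_neg hz]
        have := hAdiff r x z
        rw [this]
        congr 2
        by_cases hzr : z = (⟨x.1, r x.1⟩ : (a : Fin s) × Fin (m a))
        · have hnk : ¬ x.1 = y.1 := by
            intro hh
            apply hz
            rw [hzr, ← hry]
            exact Sigma.ext hh (by rw [hh])
          rw [if_pos hzr, if_pos (show z = (⟨x.1, r x.1⟩ : (a : Fin s) × Fin (m a)) ∧ ¬ x.1 = y.1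
            from ⟨hzr, hnk⟩)]
        · rw [if_neg hzr,
            if_neg (show ¬ (z = (⟨x.1, r x.1⟩ : (a : Fin s) × Fin (m a)) ∧ ¬ x.1 = y.1)
              from fun hh => hzr hh.1)]
    · intro a b hb
      have : ∀ β : Fin (m b),
          (A.updateCol y (fun x => (min (j x.1) l : ℤ))) ⟨a, r a⟩ ⟨b, β⟩
            = A ⟨a, r a⟩ ⟨b, β⟩ := by
        intro β
        rw [Matrix.updateCol_apply, if_neg]
        intro hh
        exact hb (congrArg Sigma.fst hh)
      rw [Finset.sum_congr rfl (fun β _ => this β), hsumA r a b,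
        Matrix.updateCol_apply, if_neg hb]
    · intro a b hb
      subst hb
      rw [hry, Matrix.updateCol_apply, if_pos rfl, Matrix.updateCol_apply, if_pos rfl]
  refine ⟨part1, ?_⟩
  intro hAne y
  rw [part1 y, hdetA]
  have h2 := mul_ne_zero_iff.mp (hdetA ▸ hAne)
  push_cast
  rw [mul_div_mul_right]
  exact_mod_cast h2.2
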